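/- One-step recurrence for Acc-S-DANE: let each f_i be μ-convex with μ ≥ 0 and let {f_i} have δ_s-SOD of size s with δ_s > 0; let λ > 0. Fix a subset S ⊆ {1,…,n} with |S| = s, reals A_r ≥ 0, B_r > 0, a_{r+1} > 0 with λ a_{r+1}² = (A_r + a_{r+1}) B_r, points x^r, v^r ∈ E, and arbitrary points x_{i,r+1} ∈ E for i ∈ S. Put A_{r+1} := A_r + a_{r+1}, B_{r+1} := B_r + μ a_{r+1}, y^r := (A_r x^r + a_{r+1} v^r)/A_{r+1}, x^{r+1} := (1/s)Σ_{i∈S} x_{i,r+1}, and v^{r+1} := (B_r v^r + a_{r+1} μ x^{r+1} − a_{r+1}(1/s)Σ_{i∈S} ∇f_i(x_{i,r+1}))/B_{r+1}. Let x* be a minimizer of f. Then A_r f_S(x^r) + a_{r+1} f_S(x*) + (B_r/2)‖v^r − x*‖² ≥ A_{r+1} f_S(x^{r+1}) + (B_{r+1}/2)‖v^{r+1} − x*‖² + A_{r+1}[((λ − δ_s)/2)(1/s)Σ_{i∈S}‖x_{i,r+1} − y^r‖² − (1/λ)(1/s)Σ_{i∈S}‖∇F_{i,r}(x_{i,r+1})‖²],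 where ∇F_{i,r}(x) := ∇f_i(x) + ∇f_S(y^r) − ∇f_i(y^r) + λ(x − y^r). -/

import Mathlib

open Finset RealInnerProductSpace

section AuxLemmas

variable {E : Type*} [NormedAddCommGroup E] [InnerProductSpace ℝ E] [CompleteSpace E]

lemma hga_const_mul' {f : E → ℝ} {u x : E} (c : ℝ) (hf : HasGradientAt f u x) :
    HasGradientAt (fun z => c * f z) (c • u) x := by
  rw [hasGradientAt_iff_hasFDerivAt] at *
  simpa [map_smul] using hf.const_mul c

lemma hga_sub' {f g : E → ℝ} {u w x : E} (hf : HasGradientAt f u x) (hg : HasGradientAt g w x) :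
    HasGradientAt (fun z => f z - g z) (u - w) x := by
  rw [hasGradientAt_iff_hasFDerivAt] at *
  simpa [map_sub] using hf.fun_sub hg

lemma hga_sum' {ι : Type*} (T : Finset ι) (f : ι → E → ℝ) (u : ι → E) (x : E)
    (hf : ∀ i ∈ T, HasGradientAt (f i) (u i) x) :
    HasGradientAt (fun z => ∑ i ∈ T, f i z) (∑ i ∈ T, u i) x := by
  rw [hasGradientAt_iff_hasFDerivAt]
  have h : ∀ i ∈ T, HasFDerivAt (f i) ((InnerProductSpace.toDual ℝ E) (u i)) x :=
    fun i hi => hasGradientAt_iff_hasFDerivAt.mp (hf i hi)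
  simpa [map_sum] using HasFDerivAt.fun_sum h

/-- Jensen: squared norm of a sum. -/
lemma norm_sum_sq_le_card_mul {ι : Type*} (T : Finset ι) (z : ι → E) :
    ‖∑ i ∈ T, z i‖ ^ 2 ≤ (T.card : ℝ) * ∑ i ∈ T, ‖z i‖ ^ 2 := by
  calc ‖∑ i ∈ T, z i‖ ^ 2 ≤ (∑ i ∈ T, ‖z i‖) ^ 2 := by
        have h := norm_sum_le T z
        have h2 : (0:ℝ) ≤ ‖∑ i ∈ T, z i‖ := norm_nonneg _
        nlinarith
    _ ≤ (T.card : ℝ) * ∑ i ∈ T, ‖z i‖ ^ 2 := sq_sum_le_card_mul_sum_sq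

lemma card_mul_avg_norm_sq_le {ι : Type*} {T : Finset ι} {m : ℕ} (hm : T.card = m)
    (hm0 : 0 < (m:ℝ)) (z : ι → E) :
    (m:ℝ) * ‖(1/(m:ℝ)) • ∑ i ∈ T, z i‖ ^ 2 ≤ ∑ i ∈ T, ‖z i‖ ^ 2 := by
  have h := norm_sum_sq_le_card_mul T z
  rw [hm] at h
  rw [norm_smul, Real.norm_eq_abs, abs_of_pos (by positivity : (0:ℝ) < 1/(m:ℝ)), mul_pow]
  have hm' : (m:ℝ) ≠ 0 := ne_of_gt hm0
  have key : (m:ℝ) * ((1/(m:ℝ))^2 * ‖∑ i ∈ T, z i‖^2) = (1/(m:ℝ)) * ‖∑ i ∈ T, z i‖^2 := by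
    field_simp
  rw [key]
  calc (1/(m:ℝ)) * ‖∑ i ∈ T, z i‖^2 ≤ (1/(m:ℝ)) * ((m:ℝ) * ∑ i ∈ T, ‖z i‖^2) :=
        mul_le_mul_of_nonneg_left h (by positivity)
    _ = ∑ i ∈ T, ‖z i‖ ^ 2 := by field_simp

lemma vstep (Br ar1 μ Br1 : ℝ) (hBr : 0 < Br) (har1 : 0 < ar1) (hμ : 0 ≤ μ)
    (hBr1 : Br1 = Br + μ * ar1)
    (vr xnext xstar g vnext : E)
    (hvnext : vnext = Br1⁻¹ • (Br • vr + (ar1 * μ) • xnext - ar1 • g)) :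
    (Br / 2) * ‖vr - xstar‖ ^ 2 - (Br1 / 2) * ‖vnext - xstar‖ ^ 2
      + ar1 * ⟪g, xstar - vr⟫ + (ar1 * μ / 2) * ‖xnext - xstar‖ ^ 2
      + (ar1 ^ 2 / (2 * Br)) * ‖g‖ ^ 2 ≥ 0 := by
  subst hBr1
  have hB1pos : (0:ℝ) < Br + μ * ar1 := by positivity
  set w1 : E := vr - xstar with hw1
  set w2 : E := xnext - xstar with hw2
  have hv' : vnext - xstar = (Br + μ * ar1)⁻¹ • (Br • w1 + (ar1 * μ) • w2 - ar1 • g) := by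
    rw [hvnext, hw1, hw2, eq_inv_smul_iff₀ hB1pos.ne', smul_sub, smul_smul,
      mul_inv_cancel₀ hB1pos.ne', one_smul]
    module
  set z : E := Br • w1 + (ar1 * μ) • w2 - ar1 • g with hz
  have hnorm : ‖vnext - xstar‖ ^ 2 = ((Br + μ * ar1)⁻¹) ^ 2 * ‖z‖ ^ 2 := by
    rw [hv', norm_smul]
    simp [abs_of_pos (inv_pos.mpr hB1pos), mul_pow]
  have ez : ‖z‖ ^ 2 = Br ^ 2 * ‖w1‖ ^ 2 + (ar1 * μ) ^ 2 * ‖w2‖ ^ 2 + ar1 ^ 2 * ‖g‖ ^ 2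
      + 2 * (Br * (ar1 * μ)) * ⟪w1, w2⟫ - 2 * (Br * ar1) * ⟪w1, g⟫
      - 2 * ((ar1 * μ) * ar1) * ⟪w2, g⟫ := by
    rw [← real_inner_self_eq_norm_sq, hz]
    simp only [inner_sub_left, inner_sub_right, inner_add_left, inner_add_right,
      real_inner_smul_left, real_inner_smul_right, real_inner_self_eq_norm_sq,
      real_inner_comm w2 w1, real_inner_comm g w1, real_inner_comm g w2,
      norm_smul, Real.norm_eq_abs, mul_pow, sq_abs]
    ring
  have ew : ‖w2 - w1‖ ^ 2 = ‖w2‖ ^ 2 - 2 * ⟪w1, w2⟫ + ‖w1‖ ^ 2 := by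
    rw [norm_sub_sq_real, real_inner_comm]
  have e2 : ‖Br • (w2 - w1) + ar1 • g‖ ^ 2
      = Br ^ 2 * (‖w1‖ ^ 2 + ‖w2‖ ^ 2 - 2 * ⟪w1, w2⟫)
        + 2 * (Br * ar1) * (⟪w2, g⟫ - ⟪w1, g⟫) + ar1 ^ 2 * ‖g‖ ^ 2 := by
    rw [← real_inner_self_eq_norm_sq]
    simp only [inner_sub_left, inner_sub_right, inner_add_left, inner_add_right,
      real_inner_smul_left, real_inner_smul_right, real_inner_self_eq_norm_sq,
      real_inner_comm w2 w1, real_inner_comm g w1, real_inner_comm g w2,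
      norm_smul, Real.norm_eq_abs, mul_pow, sq_abs, ew]
    ring
  have e3 : ⟪g, xstar - vr⟫ = -⟪w1, g⟫ := by
    rw [hw1, real_inner_comm]
    simp [inner_sub_left]
  have key : (Br / 2) * ‖w1‖ ^ 2 - ((Br + μ * ar1) / 2) * ‖vnext - xstar‖ ^ 2
      + ar1 * ⟪g, xstar - vr⟫ + (ar1 * μ / 2) * ‖w2‖ ^ 2
      + (ar1 ^ 2 / (2 * Br)) * ‖g‖ ^ 2
      = (ar1 * μ / (2 * Br * (Br + μ * ar1))) * ‖Br • (w2 - w1) + ar1 • g‖ ^ 2 := by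
    rw [hnorm, ez, e2, e3]
    field_simp
    ring
  rw [ge_iff_le, key]
  positivity

end AuxLemmas
set_option maxHeartbeats 1000000 in
/-- One-step recurrence for Acc-S-DANE (Lemma `thm:OneStepRecurrence2`). -/
theorem acc_sdane_one_step_recurrence
    {E : Type*} [NormedAddCommGroup E] [InnerProductSpace ℝ E] [CompleteSpace E]
    (n : ℕ) (hn : 0 < n)
    (f' : Fin n → E → ℝ) (hdiff : ∀ i, Differentiable ℝ (f' i))
    (f : E → ℝ) (hfdef : f = fun x => (1 / (n : ℝ)) * ∑ i, f' i x)
    (μ : ℝ) (hμ : 0 ≤ μ)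
    (hconv : ∀ i, ∀ x y : E,
      f' i y ≥ f' i x + ⟪gradient (f' i) x, y - x⟫ + (μ / 2) * ‖x - y‖ ^ 2)
    (s : ℕ) (hs1 : 1 ≤ s) (hsn : s ≤ n)
    (δs : ℝ) (hδs : 0 < δs)
    (hSOD : ∀ S : Finset (Fin n), S.card = s → ∀ x y : E,
      (1 / (s : ℝ)) * ∑ i ∈ S,
          ‖gradient (fun z => (1 / (s : ℝ)) * (∑ j ∈ S, f' j z) - f' i z) x
            - gradient (fun z => (1 / (s : ℝ)) * (∑ j ∈ S, f' j z) - f' i z) y‖ ^ 2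
        ≤ δs ^ 2 * ‖x - y‖ ^ 2)
    (lam : ℝ) (hlam : 0 < lam)
    (S : Finset (Fin n)) (hS : S.card = s)
    (Ar Br ar1 : ℝ) (hAr : 0 ≤ Ar) (hBr : 0 < Br) (har1 : 0 < ar1)
    (haeq : lam * ar1 ^ 2 = (Ar + ar1) * Br)
    (Ar1 : ℝ) (hAr1 : Ar1 = Ar + ar1)
    (Br1 : ℝ) (hBr1 : Br1 = Br + μ * ar1)
    (xr vr : E) (yr : E) (hyr : yr = Ar1⁻¹ • (Ar • xr + ar1 • vr))
    (xi : Fin n → E)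
    (xnext : E) (hxnext : xnext = (1 / (s : ℝ)) • ∑ i ∈ S, xi i)
    (vnext : E) (hvnext : vnext = Br1⁻¹ •
      (Br • vr + (ar1 * μ) • xnext
        - ar1 • ((1 / (s : ℝ)) • ∑ i ∈ S, gradient (f' i) (xi i))))
    (xstar : E) (hstar : ∀ z, f xstar ≤ f z) :
    Ar * ((1 / (s : ℝ)) * ∑ i ∈ S, f' i xr)
      + ar1 * ((1 / (s : ℝ)) * ∑ i ∈ S, f' i xstar)
      + (Br / 2) * ‖vr - xstar‖ ^ 2
    ≥ Ar1 * ((1 / (s : ℝ)) * ∑ i ∈ S, f' i xnext)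
      + (Br1 / 2) * ‖vnext - xstar‖ ^ 2
      + Ar1 * (((lam - δs) / 2) * ((1 / (s : ℝ)) * ∑ i ∈ S, ‖xi i - yr‖ ^ 2)
        - (1 / lam) * ((1 / (s : ℝ)) * ∑ i ∈ S,
            ‖gradient (f' i) (xi i)
              + gradient (fun z => (1 / (s : ℝ)) * ∑ j ∈ S, f' j z) yr
              - gradient (f' i) yr + lam • (xi i - yr)‖ ^ 2)) := by
  clear hstar hfdef hn hsn
  have hs0 : (0:ℝ) < (s:ℝ) := by exact_mod_cast hs1
  have hsne : (s:ℝ) ≠ 0 := ne_of_gt hs0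
  have hA1pos : 0 < Ar1 := by rw [hAr1]; linarith
  have hB1pos : 0 < Br1 := by rw [hBr1]; nlinarith
  -- gradient linearity facts
  have hgS : ∀ w : E, gradient (fun z => (1 / (s:ℝ)) * ∑ j ∈ S, f' j z) w
      = (1 / (s:ℝ)) • ∑ j ∈ S, gradient (f' j) w := fun w =>
    (hga_const_mul' _ (hga_sum' S _ _ w fun j _ => ((hdiff j) w).hasGradientAt)).gradient
  have hgh : ∀ (i : Fin n) (w : E),
      gradient (fun z => (1 / (s:ℝ)) * (∑ j ∈ S, f' j z) - f' i z) w
      = (1 / (s:ℝ)) • (∑ j ∈ S, gradient (f' j) w) - gradient (f' i) w := fun i w =>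
    (hga_sub' (hga_const_mul' _ (hga_sum' S _ _ w fun j _ => ((hdiff j) w).hasGradientAt))
      ((hdiff i) w).hasGradientAt).gradient
  rw [hgS yr]
  -- abbreviations
  set H : E := (1 / (s:ℝ)) • ∑ j ∈ S, gradient (f' j) yr with hH
  set K : E := (1 / (s:ℝ)) • ∑ j ∈ S, gradient (f' j) xnext with hK
  set g : E := (1 / (s:ℝ)) • ∑ i ∈ S, gradient (f' i) (xi i) with hg
  set SFr : ℝ := ∑ i ∈ S, f' i xr with hSFr
  set SFs : ℝ := ∑ i ∈ S, f' i xstar with hSFs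
  set SFn : ℝ := ∑ i ∈ S, f' i xnext with hSFn
  set Q : ℝ := ∑ i ∈ S, ‖xi i - yr‖ ^ 2 with hQ
  set P : ℝ := ∑ i ∈ S, ‖gradient (f' i) (xi i) + H - gradient (f' i) yr
      + lam • (xi i - yr)‖ ^ 2 with hP
  set SF : ℝ := ∑ i ∈ S, f' i (xi i) with hSF
  set SG : ℝ := ∑ i ∈ S, ⟪gradient (f' i) (xi i), yr - xi i⟫ with hSG
  set SE : ℝ := ∑ i ∈ S, ⟪gradient (f' i) (xi i) + H - gradient (f' i) yr
      + lam • (xi i - yr), yr - xi i⟫ with hSE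
  set SH : ℝ := ∑ i ∈ S, ⟪H - gradient (f' i) yr, xi i - yr⟫ with hSH
  set X : ℝ := ∑ i ∈ S, ‖xi i - xstar‖ ^ 2 with hX
  -- basic sum identities
  have hxsum : ∑ i ∈ S, xi i = (s:ℝ) • xnext := by
    rw [hxnext, smul_smul, mul_one_div, div_self hsne, one_smul]
  have hsub0 : ∑ i ∈ S, (xnext - xi i) = 0 := by
    rw [Finset.sum_sub_distrib, hxsum, Finset.sum_const, hS, ← Nat.cast_smul_eq_nsmul ℝ, sub_self]
  have hNsum : ∑ i ∈ S, (H - gradient (f' i) yr) = 0 := by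
    rw [Finset.sum_sub_distrib, Finset.sum_const, hS, ← Nat.cast_smul_eq_nsmul ℝ, hH,
      smul_smul, mul_one_div, div_self hsne, one_smul, sub_self]
  have hGsum : ∑ i ∈ S, gradient (f' i) (xi i) = (s:ℝ) • g := by
    rw [hg, smul_smul, mul_one_div, div_self hsne, one_smul]
  have hPpos : 0 ≤ P := Finset.sum_nonneg fun i _ => sq_nonneg _
  have hQpos : 0 ≤ Q := Finset.sum_nonneg fun i _ => sq_nonneg _
  -- main inequality blocks
  have hAi : ∀ i ∈ S, Ar1 * f' i (xi i) + Ar1 * ⟪gradient (f' i) (xi i), yr - xi i⟫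
      + ar1 * ⟪gradient (f' i) (xi i), xstar - vr⟫ + (ar1 * μ / 2) * ‖xi i - xstar‖ ^ 2
      ≤ Ar * f' i xr + ar1 * f' i xstar := by
    intro i _
    have h1 := (hconv i (xi i) xr).le
    have h2 := (hconv i (xi i) xstar).le
    have hyr' : Ar1 • yr = Ar • xr + ar1 • vr := by
      rw [hyr, smul_smul, mul_inv_cancel₀ hA1pos.ne', one_smul]
    have hv : Ar • (xr - xi i) + ar1 • (xstar - xi i)
        = Ar1 • (yr - xi i) + ar1 • (xstar - vr) := by
      rw [smul_sub Ar1, hyr', hAr1]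
      module
    have hinner : Ar * ⟪gradient (f' i) (xi i), xr - xi i⟫
        + ar1 * ⟪gradient (f' i) (xi i), xstar - xi i⟫
        = Ar1 * ⟪gradient (f' i) (xi i), yr - xi i⟫
        + ar1 * ⟪gradient (f' i) (xi i), xstar - vr⟫ := by
      rw [← real_inner_smul_right, ← real_inner_smul_right, ← real_inner_smul_right,
        ← real_inner_smul_right, ← inner_add_right, ← inner_add_right, hv]
    have h1' := mul_le_mul_of_nonneg_left h1 hAr
    have h2' := mul_le_mul_of_nonneg_left h2 har1.le
    have hnn : 0 ≤ Ar * (μ/2 * ‖xi i - xr‖^2) := by positivity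
    have hAr1mul : Ar1 * f' i (xi i) = Ar * f' i (xi i) + ar1 * f' i (xi i) := by
      rw [hAr1]; ring
    nlinarith [h1', h2', hinner, hnn, hAr1mul]
  have hSGv : ∑ i ∈ S, ⟪gradient (f' i) (xi i), xstar - vr⟫ = (s:ℝ) * ⟪g, xstar - vr⟫ := by
    rw [← sum_inner, hGsum, real_inner_smul_left]
  have mainA : Ar1 * SF + Ar1 * SG + ar1 * ((s:ℝ) * ⟪g, xstar - vr⟫) + (ar1 * μ / 2) * X
      ≤ Ar * SFr + ar1 * SFs := by
    have hsum := Finset.sum_le_sum hAi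
    simp only [Finset.sum_add_distrib, ← Finset.mul_sum] at hsum
    rw [hSGv] at hsum
    rw [hSF, hSG, hX, hSFr, hSFs]
    exact hsum
  have jens2 : (s:ℝ) * ‖xnext - xstar‖ ^ 2 ≤ X := by
    have h0 : xnext - xstar = (1/(s:ℝ)) • ∑ i ∈ S, (xi i - xstar) := by
      rw [Finset.sum_sub_distrib, Finset.sum_const, hS, ← Nat.cast_smul_eq_nsmul ℝ, smul_sub,
        ← hxnext, smul_smul, one_div, inv_mul_cancel₀ hsne, one_smul]
    rw [h0, hX]
    exact card_mul_avg_norm_sq_le hS hs0 _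
  have mainB : SFn ≤ SF + SH + (δs / 2) * Q := by
    have hb1 : SFn ≤ SF + ∑ i ∈ S, ⟪gradient (f' i) xnext, xnext - xi i⟫ := by
      rw [hSFn, hSF, ← Finset.sum_add_distrib]
      apply Finset.sum_le_sum
      intro i _
      have h := (hconv i xnext (xi i)).le
      have hflip : ⟪gradient (f' i) xnext, xi i - xnext⟫
          = -⟪gradient (f' i) xnext, xnext - xi i⟫ := by
        rw [show xi i - xnext = -(xnext - xi i) by abel, inner_neg_right]
      have hnn : 0 ≤ μ/2 * ‖xnext - xi i‖^2 := by positivity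
      linarith [h, hflip.le, hflip.ge, hnn]
    have hK0 : ∑ i ∈ S, ⟪K, xnext - xi i⟫ = 0 := by
      rw [← inner_sum, hsub0, inner_zero_right]
    have hH0 : ∑ i ∈ S, ⟪H - gradient (f' i) yr, yr - xnext⟫ = 0 := by
      rw [← sum_inner, hNsum, inner_zero_left]
    have hper : ∀ i ∈ S, ⟪gradient (f' i) xnext, xnext - xi i⟫
        = ⟪K, xnext - xi i⟫
          + ⟪K - gradient (f' i) xnext - (H - gradient (f' i) yr), xi i - xnext⟫
          + ⟪H - gradient (f' i) yr, xi i - yr⟫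
          + ⟪H - gradient (f' i) yr, yr - xnext⟫ := by
      intro i _
      simp only [inner_sub_left, inner_sub_right]
      ring
    have hb2 : ∑ i ∈ S, ⟪gradient (f' i) xnext, xnext - xi i⟫
        = ∑ i ∈ S, ⟪K - gradient (f' i) xnext - (H - gradient (f' i) yr), xi i - xnext⟫
          + SH := by
      rw [Finset.sum_congr rfl hper, Finset.sum_add_distrib, Finset.sum_add_distrib,
        Finset.sum_add_distrib, hK0, hH0, hSH]
      ring
    have hyoung : ∀ i ∈ S, ⟪K - gradient (f' i) xnext - (H - gradient (f' i) yr), xi i - xnext⟫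
        ≤ (1/(2*δs)) * ‖K - gradient (f' i) xnext - (H - gradient (f' i) yr)‖^2
          + (δs/2) * ‖xi i - xnext‖^2 := by
      intro i _
      have h1 := real_inner_le_norm (K - gradient (f' i) xnext - (H - gradient (f' i) yr))
        (xi i - xnext)
      have h3 : (1/(2*δs)) * ‖K - gradient (f' i) xnext - (H - gradient (f' i) yr)‖^2
          + (δs/2) * ‖xi i - xnext‖^2
          - ‖K - gradient (f' i) xnext - (H - gradient (f' i) yr)‖ * ‖xi i - xnext‖
          = (1/(2*δs)) * (‖K - gradient (f' i) xnext - (H - gradient (f' i) yr)‖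
            - δs * ‖xi i - xnext‖)^2 := by
        field_simp
        ring
      have h4 : 0 ≤ (1/(2*δs)) * (‖K - gradient (f' i) xnext - (H - gradient (f' i) yr)‖
          - δs * ‖xi i - xnext‖)^2 := by positivity
      linarith
    have hsod2 : ∑ i ∈ S, ‖K - gradient (f' i) xnext - (H - gradient (f' i) yr)‖^2
        ≤ (s:ℝ) * (δs^2 * ‖xnext - yr‖^2) := by
      have h := hSOD S hS xnext yr
      simp only [hgh] at h
      have h2 := mul_le_mul_of_nonneg_left h hs0.le
      rw [← mul_assoc, mul_one_div, div_self hsne, one_mul] at h2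
      rw [hK, hH]
      exact h2
    have hvar : ∑ i ∈ S, ‖xi i - xnext‖^2 = Q - (s:ℝ) * ‖xnext - yr‖^2 := by
      have hsumu : ∑ i ∈ S, (xi i - yr) = (s:ℝ) • (xnext - yr) := by
        rw [Finset.sum_sub_distrib, hxsum, Finset.sum_const, hS,
          ← Nat.cast_smul_eq_nsmul ℝ, smul_sub]
      have hperv : ∀ i ∈ S, ‖xi i - xnext‖^2
          = ‖xi i - yr‖^2 - 2*⟪xi i - yr, xnext - yr⟫ + ‖xnext - yr‖^2 := by
        intro i _
        rw [show xi i - xnext = (xi i - yr) - (xnext - yr) by abel, norm_sub_sq_real]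
      have hip : ∑ i ∈ S, ⟪xi i - yr, xnext - yr⟫ = (s:ℝ) * ‖xnext - yr‖^2 := by
        rw [← sum_inner, hsumu, real_inner_smul_left, real_inner_self_eq_norm_sq]
      rw [Finset.sum_congr rfl hperv, Finset.sum_add_distrib, Finset.sum_sub_distrib,
        Finset.sum_const, hS, nsmul_eq_mul, ← Finset.mul_sum, hip, hQ]
      ring
    have hb3 : ∑ i ∈ S, ⟪K - gradient (f' i) xnext - (H - gradient (f' i) yr), xi i - xnext⟫
        ≤ (δs / 2) * Q := by
      have t1 := Finset.sum_le_sum hyoung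
      simp only [Finset.sum_add_distrib, ← Finset.mul_sum] at t1
      have t2 := mul_le_mul_of_nonneg_left hsod2 (by positivity : (0:ℝ) ≤ 1/(2*δs))
      have t3 : (1/(2*δs)) * ((s:ℝ)*(δs^2*‖xnext - yr‖^2))
          = (δs/2) * ((s:ℝ)*‖xnext - yr‖^2) := by
        field_simp
      have hvar2 : (δs/2) * ∑ i ∈ S, ‖xi i - xnext‖^2
          = (δs/2)*Q - (δs/2)*((s:ℝ)*‖xnext - yr‖^2) := by
        rw [hvar]; ring
      linarith [t1, t2, t3, hvar2]
    linarith [hb1, hb2.le, hb2.ge, hb3]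
  have mainC : SG = SE + SH + lam * Q := by
    rw [hSG, hSE, hSH, hQ, Finset.mul_sum, ← Finset.sum_add_distrib, ← Finset.sum_add_distrib]
    apply Finset.sum_congr rfl
    intro i _
    have hns : yr - xi i = -(xi i - yr) := by abel
    simp only [hns, inner_neg_right, inner_add_left, inner_sub_left, real_inner_smul_left,
      real_inner_self_eq_norm_sq]
    have hself : ⟪xi i, xi i - yr⟫ - ⟪yr, xi i - yr⟫ = ‖xi i - yr‖^2 := by
      rw [← inner_sub_left, real_inner_self_eq_norm_sq]
    have hself2 : lam * (⟪xi i, xi i - yr⟫ - ⟪yr, xi i - yr⟫) = lam * ‖xi i - yr‖^2 := by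
      rw [hself]
    linarith [hself2]
  have mainE := vstep Br ar1 μ Br1 hBr har1 hμ hBr1 vr xnext xstar g vnext hvnext
  have mainF : (s:ℝ) * ‖g‖ ^ 2 ≤ P + 2 * lam * SE + lam ^ 2 * Q := by
    have hdsum : ∑ i ∈ S, ((gradient (f' i) (xi i) + H - gradient (f' i) yr
        + lam • (xi i - yr)) - lam • (xi i - yr)) = (s:ℝ) • g := by
      have hh : ∀ i ∈ S, (gradient (f' i) (xi i) + H - gradient (f' i) yr
          + lam • (xi i - yr)) - lam • (xi i - yr)
          = gradient (f' i) (xi i) + (H - gradient (f' i) yr) := by intro i _; abel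
      rw [Finset.sum_congr rfl hh, Finset.sum_add_distrib, hNsum, add_zero, hGsum]
    have hgd : g = (1/(s:ℝ)) • ∑ i ∈ S, ((gradient (f' i) (xi i) + H - gradient (f' i) yr
        + lam • (xi i - yr)) - lam • (xi i - yr)) := by
      rw [hdsum, smul_smul, one_div, inv_mul_cancel₀ hsne, one_smul]
    have hJ := card_mul_avg_norm_sq_le hS hs0 (fun i => (gradient (f' i) (xi i) + H
        - gradient (f' i) yr + lam • (xi i - yr)) - lam • (xi i - yr))
    rw [← hgd] at hJ
    have hexp : ∑ i ∈ S, ‖(gradient (f' i) (xi i) + H - gradient (f' i) yr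
        + lam • (xi i - yr)) - lam • (xi i - yr)‖^2 = P + 2 * lam * SE + lam ^ 2 * Q := by
      rw [hP, hSE, hQ, Finset.mul_sum, Finset.mul_sum, ← Finset.sum_add_distrib,
        ← Finset.sum_add_distrib]
      apply Finset.sum_congr rfl
      intro i _
      rw [norm_sub_sq_real, real_inner_smul_right, norm_smul, Real.norm_eq_abs,
        abs_of_pos hlam, mul_pow]
      have hflip : ⟪gradient (f' i) (xi i) + H - gradient (f' i) yr + lam • (xi i - yr),
          xi i - yr⟫ = -⟪gradient (f' i) (xi i) + H - gradient (f' i) yr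
          + lam • (xi i - yr), yr - xi i⟫ := by
        rw [show xi i - yr = -(yr - xi i) by abel, inner_neg_right]
      rw [hflip]
      ring
    rw [← hexp]
    exact hJ
  -- pre-scaled facts for the final linear arithmetic
  have hc : ar1 ^ 2 / (2 * Br) = Ar1 / (2 * lam) := by
    rw [hAr1]
    field_simp
    linarith [haeq]
  have mainF2 : (ar1 ^ 2 / (2 * Br)) * ((s:ℝ) * ‖g‖ ^ 2)
      ≤ (Ar1 / (2 * lam)) * P + Ar1 * SE + (Ar1 * lam / 2) * Q := by
    have h := mul_le_mul_of_nonneg_left mainF (by positivity : (0:ℝ) ≤ ar1 ^ 2 / (2 * Br))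
    rw [hc] at h ⊢
    calc (Ar1 / (2 * lam)) * ((s:ℝ) * ‖g‖^2) ≤ (Ar1 / (2*lam)) * (P + 2*lam*SE + lam^2*Q) := h
      _ = (Ar1 / (2 * lam)) * P + Ar1 * SE + (Ar1 * lam / 2) * Q := by field_simp
  have mainE2 := mul_le_mul_of_nonneg_left mainE hs0.le
  have mainB2 := mul_le_mul_of_nonneg_left mainB hA1pos.le
  have jens2b := mul_le_mul_of_nonneg_left jens2 (by positivity : (0:ℝ) ≤ ar1 * μ / 2)
  have hPP : Ar1 * ((1/lam) * P) = (Ar1 / (2*lam)) * P + (Ar1 / (2*lam)) * P := by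
    field_simp; ring
  have hPP2 : 0 ≤ (Ar1 / (2*lam)) * P := by positivity
  have mainC2 : Ar1 * SG = Ar1 * (SE + SH + lam * Q) := by rw [mainC]
  -- final assembly, scaled by s
  have key : Ar1 * SFn + (s:ℝ) * ((Br1/2) * ‖vnext - xstar‖^2)
        + (Ar1 * ((lam - δs)/2) * Q - Ar1 * ((1/lam) * P))
      ≤ Ar * SFr + ar1 * SFs + (s:ℝ) * ((Br/2) * ‖vr - xstar‖^2) := by
    linarith [mainA, mainE2, mainB2, jens2b, mainF2, mainC2, hPP, hPP2]
  have hs' : (0:ℝ) ≤ 1/(s:ℝ) := by positivity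
  have eL : Ar * ((1/(s:ℝ)) * SFr) + ar1 * ((1/(s:ℝ)) * SFs) + (Br/2) * ‖vr - xstar‖^2
      = (1/(s:ℝ)) * (Ar * SFr + ar1 * SFs + (s:ℝ) * ((Br/2) * ‖vr - xstar‖^2)) := by
    field_simp
  have eR : Ar1 * ((1/(s:ℝ)) * SFn) + (Br1/2) * ‖vnext - xstar‖^2
        + Ar1 * (((lam - δs)/2) * ((1/(s:ℝ)) * Q) - (1/lam) * ((1/(s:ℝ)) * P))
      = (1/(s:ℝ)) * (Ar1 * SFn + (s:ℝ) * ((Br1/2) * ‖vnext - xstar‖^2)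
          + (Ar1 * ((lam - δs)/2) * Q - Ar1 * ((1/lam) * P))) := by
    field_simp
  rw [ge_iff_le, eL, eR]
  exact mul_le_mul_of_nonneg_left key hs'
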